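/- Define H(A, B) = Σⱼ 2(d·kⱼ)²Bⱼ² + (μ₀/2)Σⱼ Aⱼ² + β₂A₁A₂A₃ + (K₀/4)Σⱼ Aⱼ⁴ + (K₂/2)(A₁²A₂² + A₁²A₃² + A₂²A₃²) for real A = (A₁,A₂,A₃), B = (B₁,B₂,B₃). If (A(Ξ), B(Ξ)) is a differentiable solution of the system ∂_Ξ Aⱼ = Bⱼ, 4(d·kⱼ)²∂_Ξ Bⱼ = -μ₀Aⱼ - c₀Bⱼ - β₂AₗAₘ - (K₀Aⱼ² + K₂(Aₗ² + Aₘ²))Aⱼ (for {j,l,m} = {1,2,3}), then d/dΞ H(A(Ξ), B(Ξ)) = -c₀(B₁(Ξ)² + B₂(Ξ)² + B₃(Ξ)²). In particular H is non-increasing along solutions when c₀ > 0. -/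

import Mathlib

/-- Euclidean dot product on `ℝ²` (represented as `ℝ × ℝ`). -/
def dot2 (v w : ℝ × ℝ) : ℝ := v.1 * w.1 + v.2 * w.2

/-- Along any differentiable solution of the real leading-order reduced
travelling-wave system `∂Aⱼ = Bⱼ`, `4(d·kⱼ)²∂Bⱼ = -μ₀Aⱼ - c₀Bⱼ - β₂AₗAₘ -
(K₀Aⱼ² + K₂(Aₗ²+Aₘ²))Aⱼ`, the Lyapunov function
`H = Σⱼ 2(d·kⱼ)²Bⱼ² + (μ₀/2)ΣⱼAⱼ² + β₂A₁A₂A₃ + (K₀/4)ΣⱼAⱼ⁴ +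
(K₂/2)(A₁²A₂² + A₁²A₃² + A₂²A₃²)` satisfies
`dH/dΞ = -c₀(B₁² + B₂² + B₃²)`; in particular `H` is non-increasing along
solutions when `c₀ > 0`. -/
theorem stmt11 (d k1 k2 k3 : ℝ × ℝ) (hd : dot2 d d = 1)
    (hk1 : dot2 d k1 ≠ 0) (hk2 : dot2 d k2 ≠ 0) (hk3 : dot2 d k3 ≠ 0)
    (hksum : k1 + k2 + k3 = 0)
    (μ₀ c₀ β₂ K₀ K₂ : ℝ)
    (A1 A2 A3 B1 B2 B3 B1' B2' B3' H : ℝ → ℝ)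
    (hH : ∀ t, H t =
        2 * (dot2 d k1)^2 * (B1 t)^2 + 2 * (dot2 d k2)^2 * (B2 t)^2
          + 2 * (dot2 d k3)^2 * (B3 t)^2
        + μ₀ / 2 * ((A1 t)^2 + (A2 t)^2 + (A3 t)^2)
        + β₂ * (A1 t) * (A2 t) * (A3 t)
        + K₀ / 4 * ((A1 t)^4 + (A2 t)^4 + (A3 t)^4)
        + K₂ / 2 * ((A1 t)^2 * (A2 t)^2 + (A1 t)^2 * (A3 t)^2 + (A2 t)^2 * (A3 t)^2))
    (hA1 : ∀ t, HasDerivAt A1 (B1 t) t)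
    (hA2 : ∀ t, HasDerivAt A2 (B2 t) t)
    (hA3 : ∀ t, HasDerivAt A3 (B3 t) t)
    (hB1 : ∀ t, HasDerivAt B1 (B1' t) t)
    (hB2 : ∀ t, HasDerivAt B2 (B2' t) t)
    (hB3 : ∀ t, HasDerivAt B3 (B3' t) t)
    (hode1 : ∀ t, 4 * (dot2 d k1)^2 * B1' t =
        -μ₀ * A1 t - c₀ * B1 t - β₂ * (A2 t) * (A3 t)
          - (K₀ * (A1 t)^2 + K₂ * ((A2 t)^2 + (A3 t)^2)) * A1 t)
    (hode2 : ∀ t, 4 * (dot2 d k2)^2 * B2' t =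
        -μ₀ * A2 t - c₀ * B2 t - β₂ * (A1 t) * (A3 t)
          - (K₀ * (A2 t)^2 + K₂ * ((A1 t)^2 + (A3 t)^2)) * A2 t)
    (hode3 : ∀ t, 4 * (dot2 d k3)^2 * B3' t =
        -μ₀ * A3 t - c₀ * B3 t - β₂ * (A1 t) * (A2 t)
          - (K₀ * (A3 t)^2 + K₂ * ((A1 t)^2 + (A2 t)^2)) * A3 t) :
    (∀ t, HasDerivAt H (-c₀ * ((B1 t)^2 + (B2 t)^2 + (B3 t)^2)) t) ∧
    (0 < c₀ → ∀ s t : ℝ, s ≤ t → H t ≤ H s) := by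

  have hderiv : ∀ t, HasDerivAt H (-c₀ * ((B1 t)^2 + (B2 t)^2 + (B3 t)^2)) t := by
    intro t
    have hHf : H = fun s =>
        2 * (dot2 d k1)^2 * (B1 s)^2 + 2 * (dot2 d k2)^2 * (B2 s)^2
          + 2 * (dot2 d k3)^2 * (B3 s)^2
        + μ₀ / 2 * ((A1 s)^2 + (A2 s)^2 + (A3 s)^2)
        + β₂ * (A1 s) * (A2 s) * (A3 s)
        + K₀ / 4 * ((A1 s)^4 + (A2 s)^4 + (A3 s)^4)
        + K₂ / 2 * ((A1 s)^2 * (A2 s)^2 + (A1 s)^2 * (A3 s)^2 + (A2 s)^2 * (A3 s)^2) :=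
      funext hH
    rw [hHf]
    have Hd := (((((((((hB1 t).pow 2).const_mul (2 * (dot2 d k1)^2)).add
        (((hB2 t).pow 2).const_mul (2 * (dot2 d k2)^2))).add
        (((hB3 t).pow 2).const_mul (2 * (dot2 d k3)^2))).add
        (((((hA1 t).pow 2).add ((hA2 t).pow 2)).add ((hA3 t).pow 2)).const_mul (μ₀ / 2))).add
        ((((hA1 t).const_mul β₂).mul (hA2 t)).mul (hA3 t))).add
        (((((hA1 t).pow 4).add ((hA2 t).pow 4)).add ((hA3 t).pow 4)).const_mul (K₀ / 4))).add
        ((((((hA1 t).pow 2).mul ((hA2 t).pow 2)).add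
            (((hA1 t).pow 2).mul ((hA3 t).pow 2))).add
            (((hA2 t).pow 2).mul ((hA3 t).pow 2))).const_mul (K₂ / 2)))
    refine Hd.congr_deriv (Eq.symm ?_)
    simp only [Pi.pow_apply, Pi.mul_apply]
    linear_combination (-(B1 t)) * hode1 t + (-(B2 t)) * hode2 t + (-(B3 t)) * hode3 t
  refine ⟨hderiv, fun hc s t hst => ?_⟩
  have := antitone_of_deriv_nonpos (f := H)
    (fun x => (hderiv x).differentiableAt) (fun x => by
      rw [(hderiv x).deriv]
      have h1 := sq_nonneg (B1 x); have h2 := sq_nonneg (B2 x); have h3 := sq_nonneg (B3 x)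
      nlinarith)
  exact this hst
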